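/- Let p₁, p₂ ∈ [0,1] with p₁ > 0, and let N ≥ 1 be an integer. Then the expected number of successes in N steps starting from the failure state satisfies the exact identity ∑_{k=1}^{N} (P_BKP^k)₀₂ = N·p₁p₂/(1+p₁) − p₁p₂·(1−(−p₁)^N)/(1+p₁)². In particular, the exact mean throughput per step over a horizon of N steps is p₁p₂/(1+p₁) − p₁p₂(1−(−p₁)^N)/((1+p₁)²·N). -/

import Mathlib

lemma bkp_row0 (p₁ p₂ : ℝ) (hp : (1:ℝ) + p₁ ≠ 0) (k : ℕ) :
    let P : Matrix (Fin 3) (Fin 3) ℝ :=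
      !![1 - p₁, p₁, 0; 1 - p₂, 0, p₂; 1 - p₁, p₁, 0]
    (P ^ (k+1)) 0 1 = p₁ * (1 - (-p₁) ^ (k+1)) / (1 + p₁) ∧
    (P ^ (k+1)) 0 2 = p₁ * p₂ * (1 - (-p₁) ^ k) / (1 + p₁) ∧
    (P ^ (k+1)) 0 0 = 1 - p₁ * (1 - (-p₁) ^ (k+1)) / (1 + p₁)
        - p₁ * p₂ * (1 - (-p₁) ^ k) / (1 + p₁) := by
  intro P
  induction k with
  | zero =>
    simp only [pow_one, pow_zero]
    refine ⟨?_, ?_, ?_⟩ <;> simp [P, Matrix.cons_val_zero, Matrix.cons_val_one] <;>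
      field_simp <;> ring
  | succ n ih =>
    obtain ⟨ih1, ih2, ih0⟩ := ih
    have hmul : ∀ j : Fin 3, (P ^ (n+2)) 0 j =
        (P ^ (n+1)) 0 0 * P 0 j + (P ^ (n+1)) 0 1 * P 1 j + (P ^ (n+1)) 0 2 * P 2 j := by
      intro j
      rw [pow_succ, Matrix.mul_apply, Fin.sum_univ_three]
    refine ⟨?_, ?_, ?_⟩ <;>
      rw [hmul] <;> rw [ih1, ih2, ih0] <;>
      simp only [P, Matrix.cons_val', Matrix.cons_val_zero, Matrix.cons_val_one,
        Matrix.head_cons, Matrix.empty_val', Matrix.cons_val_fin_one, Matrix.head_fin_const,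
        Matrix.cons_val_two, Matrix.tail_cons, Matrix.of_apply] <;>
      field_simp <;> ring

/-- Exact finite-horizon mean throughput of double-heralded entanglement generation:
for `p₁ ∈ (0,1]`, `p₂ ∈ [0,1]`, and a horizon of `N ≥ 1` steps started from the
failure state, the expected number of successes satisfies
`∑_{k=1}^{N} (P_BKP^k)₀₂ = N·p₁p₂/(1+p₁) − p₁p₂(1−(−p₁)^N)/(1+p₁)²`,
so the mean throughput per step is
`p₁p₂/(1+p₁) − p₁p₂(1−(−p₁)^N)/((1+p₁)²·N)`. -/
theorem bkp_exact_mean_throughput (p₁ p₂ : ℝ)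
    (h₁ : 0 < p₁) (h₁' : p₁ ≤ 1) (h₂ : 0 ≤ p₂) (h₂' : p₂ ≤ 1)
    (N : ℕ) (hN : 1 ≤ N) :
    let P : Matrix (Fin 3) (Fin 3) ℝ :=
      !![1 - p₁, p₁, 0; 1 - p₂, 0, p₂; 1 - p₁, p₁, 0]
    (∑ k ∈ Finset.Icc 1 N, (P ^ k) 0 2)
      = N * (p₁ * p₂ / (1 + p₁)) - p₁ * p₂ * (1 - (-p₁) ^ N) / (1 + p₁) ^ 2 ∧
    (∑ k ∈ Finset.Icc 1 N, (P ^ k) 0 2) / N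
      = p₁ * p₂ / (1 + p₁) - p₁ * p₂ * (1 - (-p₁) ^ N) / ((1 + p₁) ^ 2 * N) := by
  intro P
  have hp : (1:ℝ) + p₁ ≠ 0 := by positivity
  have hNR : (N:ℝ) ≠ 0 := by positivity
  have hsum : (∑ k ∈ Finset.Icc 1 N, (P ^ k) 0 2)
      = N * (p₁ * p₂ / (1 + p₁)) - p₁ * p₂ * (1 - (-p₁) ^ N) / (1 + p₁) ^ 2 := by
    have h1 : (∑ k ∈ Finset.Icc 1 N, (P ^ k) 0 2)
        = ∑ i ∈ Finset.range N, p₁ * p₂ * (1 - (-p₁) ^ i) / (1 + p₁) := by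
      refine Finset.sum_nbij' (fun k => k - 1) (fun i => i + 1) ?_ ?_ ?_ ?_ ?_
      · intro k hk; simp only [Finset.mem_Icc] at hk
        simp only [Finset.mem_range]; omega
      · intro i hi; simp only [Finset.mem_range] at hi
        simp only [Finset.mem_Icc]; omega
      · intro k hk; simp only [Finset.mem_Icc] at hk
        show k - 1 + 1 = k; omega
      · intro i _; show i + 1 - 1 = i; omega
      · intro k hk; simp only [Finset.mem_Icc] at hk
        obtain ⟨m, rfl⟩ : ∃ m, k = m + 1 := ⟨k - 1, by omega⟩
        exact (bkp_row0 p₁ p₂ hp m).2.1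
    have hgeom : ∑ i ∈ Finset.range N, (-p₁ : ℝ) ^ i
        = ((-p₁) ^ N - 1) / (-p₁ - 1) := by
      exact geom_sum_eq (by intro h; nlinarith [h₁]) N
    have h2 : ∑ i ∈ Finset.range N, p₁ * p₂ * (1 - (-p₁) ^ i) / (1 + p₁)
        = ∑ i ∈ Finset.range N,
            (p₁ * p₂ / (1 + p₁) - (p₁ * p₂ / (1 + p₁)) * (-p₁:ℝ) ^ i) :=
      Finset.sum_congr rfl fun i _ => by ring
    rw [h1, h2, Finset.sum_sub_distrib, Finset.sum_const, ← Finset.mul_sum, hgeom]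
    have hne : (-p₁ : ℝ) - 1 ≠ 0 := by nlinarith
    simp only [nsmul_eq_mul, Finset.card_range]
    field_simp
    ring
  refine ⟨hsum, ?_⟩
  rw [hsum]
  field_simp
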